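/- Consider the ODE df/dt = (A + B) f on ℝ⁴, where A := (1/2)[[−1,1,0,0],[1,−1,0,0],[0,0,−1,1],[0,0,1,−1]] and B := [[0,−1,0,1],[1,0,−1,0],[0,1,0,−1],[−1,0,1,0]]. Then there exists a constant c ≥ 1 such that for every initial datum f^I ∈ ℝ⁴ with f_1^I + f_2^I + f_3^I + f_4^I = 1, the solution f(t) = e^{t(A+B)} f^I satisfies ‖f(t) − f^∞‖ ≤ c · e^{−t/2} · ‖f^I − f^∞‖ for all t ≥ 0, where f^∞ := (1/4)(1,1,1,1)ᵀ and ‖·‖ is the Euclidean norm on ℝ⁴. -/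

import Mathlib

open Matrix

/-- The BGK interaction matrix `A` of the discrete (4-state) hypocoercive model. -/
noncomputable def bgkA : Matrix (Fin 4) (Fin 4) ℝ :=
  (1/2 : ℝ) • !![-1, 1, 0, 0; 1, -1, 0, 0; 0, 0, -1, 1; 0, 0, 1, -1]

/-- The skew-symmetric transport matrix `B` of the discrete hypocoercive model. -/
noncomputable def bgkB : Matrix (Fin 4) (Fin 4) ℝ :=
  !![0, -1, 0, 1; 1, 0, -1, 0; 0, 1, 0, -1; -1, 0, 1, 0]

lemma bgk_mulVec (v : Fin 4 → ℝ) :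
    (bgkA + bgkB) *ᵥ v =
      ![-(1/2) * v 0 - (1/2) * v 1 + v 3,
        (3/2) * v 0 - (1/2) * v 1 - v 2,
        v 1 - (1/2) * v 2 - (1/2) * v 3,
        -v 0 + (3/2) * v 2 - (1/2) * v 3] := by
  funext i
  fin_cases i <;>
    simp [bgkA, bgkB, mulVec, dotProduct, Fin.sum_univ_four] <;> ring

/-- for the hypocoercive ODE `df/dt = (A+B) f` on `ℝ⁴` there exists
`c ≥ 1` such that every solution with mass-one initial datum converges to the
steady state `f^∞ = (1/4)(1,1,1,1)ᵀ` at the sharp rate `1/2`: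
`‖f(t) - f^∞‖ ≤ c e^{-t/2} ‖f^I - f^∞‖` in the Euclidean norm. -/
theorem stmt_12 :
    ∃ c : ℝ, 1 ≤ c ∧
      ∀ fI : Fin 4 → ℝ, (∑ i, fI i) = 1 →
      ∀ f : ℝ → Fin 4 → ℝ, f 0 = fI →
      (∀ t : ℝ, HasDerivAt f ((bgkA + bgkB) *ᵥ f t) t) →
      ∀ t : ℝ, 0 ≤ t →
        Real.sqrt (∑ i, (f t i - 1/4) ^ 2) ≤
          c * Real.exp (-t/2) * Real.sqrt (∑ i, (fI i - 1/4) ^ 2) := by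
  refine ⟨3, by norm_num, ?_⟩
  intro fI hmass f hf0 hode t ht
  -- component derivatives
  have hcomp : ∀ (s : ℝ) (i : Fin 4),
      HasDerivAt (fun u => f u i) (((bgkA + bgkB) *ᵥ f s) i) s := by
    intro s i
    exact hasDerivAt_pi.1 (hode s) i
  have h0 : ∀ s : ℝ, HasDerivAt (fun u => f u 0)
      (-(1/2) * f s 0 - (1/2) * f s 1 + f s 3) s := by
    intro s; have := hcomp s 0; rwa [bgk_mulVec] at this
  have h1 : ∀ s : ℝ, HasDerivAt (fun u => f u 1)
      ((3/2) * f s 0 - (1/2) * f s 1 - f s 2) s := by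
    intro s; have := hcomp s 1; rwa [bgk_mulVec] at this
  have h2 : ∀ s : ℝ, HasDerivAt (fun u => f u 2)
      (f s 1 - (1/2) * f s 2 - (1/2) * f s 3) s := by
    intro s; have := hcomp s 2; rwa [bgk_mulVec] at this
  have h3 : ∀ s : ℝ, HasDerivAt (fun u => f u 3)
      (-f s 0 + (3/2) * f s 2 - (1/2) * f s 3) s := by
    intro s; have := hcomp s 3; rwa [bgk_mulVec] at this
  -- mass conservation
  have hmassf : ∀ s : ℝ, f s 0 + f s 1 + f s 2 + f s 3 = 1 := by
    have hderiv : ∀ s : ℝ,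
        HasDerivAt (fun u => f u 0 + f u 1 + f u 2 + f u 3) 0 s := by
      intro s
      have := (((h0 s).add (h1 s)).add (h2 s)).add (h3 s)
      refine this.congr_deriv ?_
      ring
    have hconst : ∀ s : ℝ, f s 0 + f s 1 + f s 2 + f s 3
        = f 0 0 + f 0 1 + f 0 2 + f 0 3 := by
      intro s
      exact is_const_of_deriv_eq_zero
        (fun u => (hderiv u).differentiableAt)
        (fun u => (hderiv u).deriv) s 0
    intro s
    rw [hconst s, hf0]
    have := hmass
    rw [Fin.sum_univ_four] at this
    linarith
  -- the Lyapunov functional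
  set Af : ℝ → ℝ := fun s => -f s 0 + f s 1 - f s 2 + f s 3 with hAf
  set Bf : ℝ → ℝ := fun s => -f s 0 + f s 2 with hBf
  set Cf : ℝ → ℝ := fun s => -f s 1 + f s 3 with hCf
  set W : ℝ → ℝ := fun s => Af s ^ 2 + 5 * Bf s ^ 2 + 3 * Cf s ^ 2 with hW
  have hA' : ∀ s : ℝ, HasDerivAt Af (-Af s) s := by
    intro s
    have := (((h0 s).neg.add (h1 s)).sub (h2 s)).add (h3 s)
    refine this.congr_deriv ?_; simp [hAf]; ring
  have hB' : ∀ s : ℝ, HasDerivAt Bf (-(1/2) * Bf s - (3/2) * Cf s) s := by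
    intro s
    have := (h0 s).neg.add (h2 s)
    refine this.congr_deriv ?_; simp [hBf, hCf]; ring
  have hC' : ∀ s : ℝ, HasDerivAt Cf ((5/2) * Bf s - (1/2) * Cf s) s := by
    intro s
    have := (h1 s).neg.add (h3 s)
    refine this.congr_deriv ?_; simp [hBf, hCf]; ring
  have hW' : ∀ s : ℝ, HasDerivAt W
      (-2 * Af s ^ 2 - 5 * Bf s ^ 2 - 3 * Cf s ^ 2) s := by
    intro s
    have := ((hA' s).pow 2).add
      (((hB' s).pow 2).const_mul (5 : ℝ)) |>.add
      (((hC' s).pow 2).const_mul (3 : ℝ))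
    refine this.congr_deriv ?_
    push_cast
    ring
  -- exponential decay: φ s = exp s * W s is antitone
  set φ : ℝ → ℝ := fun s => Real.exp s * W s with hφ
  have hφ' : ∀ s : ℝ, HasDerivAt φ
      (Real.exp s * (-Af s ^ 2)) s := by
    intro s
    have := (Real.hasDerivAt_exp s).mul (hW' s)
    refine this.congr_deriv ?_
    simp only [hW]
    ring
  have hanti : Antitone φ := by
    apply antitone_of_deriv_nonpos
    · intro s; exact (hφ' s).differentiableAt
    · intro s
      rw [(hφ' s).deriv]
      have : (0:ℝ) ≤ Real.exp s * Af s ^ 2 :=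
        mul_nonneg (Real.exp_pos s).le (sq_nonneg _)
      linarith
  have hdecay : W t ≤ Real.exp (-t) * W 0 := by
    have := hanti ht
    simp only [hφ, Real.exp_zero, one_mul] at this
    have hpos := Real.exp_pos t
    rw [Real.exp_neg, inv_mul_eq_div, le_div_iff₀' hpos]
    linarith [this]
  -- norm equivalences (using zero mass of g = f - 1/4)
  have hlow : 2 * (∑ i, (f t i - 1/4) ^ 2) ≤ W t := by
    rw [Fin.sum_univ_four]
    have hm := hmassf t
    simp only [hW, hAf, hBf, hCf]
    nlinarith [sq_nonneg (f t 0 - f t 1 + f t 2 - f t 3),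
      sq_nonneg (-f t 0 + f t 2), sq_nonneg (-f t 1 + f t 3)]
  have hup : W 0 ≤ 10 * (∑ i, (fI i - 1/4) ^ 2) := by
    rw [Fin.sum_univ_four]
    have hm := hmassf 0
    rw [hf0] at hm
    simp only [hW, hAf, hBf, hCf, hf0]
    nlinarith [sq_nonneg (fI 0 - fI 1 + fI 2 - fI 3),
      sq_nonneg (fI 0 + fI 1 + fI 2 + fI 3 - 1)]
  -- combine
  clear_value Af Bf Cf W φ
  have key : (∑ i, (f t i - 1/4) ^ 2) ≤
      9 * Real.exp (-t) * (∑ i, (fI i - 1/4) ^ 2) := by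
    have hexp := (Real.exp_pos (-t)).le
    have hSI : (0:ℝ) ≤ ∑ i, (fI i - 1/4) ^ 2 :=
      Finset.sum_nonneg fun i _ => sq_nonneg _
    have h1 : Real.exp (-t) * W 0 ≤ Real.exp (-t) * (10 * (∑ i, (fI i - 1/4) ^ 2)) :=
      mul_le_mul_of_nonneg_left hup hexp
    have h2 : (0:ℝ) ≤ Real.exp (-t) * (∑ i, (fI i - 1/4) ^ 2) := mul_nonneg hexp hSI
    nlinarith [hdecay, hlow, h1, h2]
  have hS : (0:ℝ) ≤ ∑ i, (fI i - 1/4) ^ 2 :=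
    Finset.sum_nonneg fun i _ => sq_nonneg _
  calc Real.sqrt (∑ i, (f t i - 1/4) ^ 2)
      ≤ Real.sqrt (9 * Real.exp (-t) * (∑ i, (fI i - 1/4) ^ 2)) :=
        Real.sqrt_le_sqrt key
    _ = 3 * Real.exp (-t/2) * Real.sqrt (∑ i, (fI i - 1/4) ^ 2) := by
        rw [Real.sqrt_mul (by positivity), Real.sqrt_mul (by norm_num)]
        have h9 : Real.sqrt 9 = 3 := by
          rw [show (9:ℝ) = 3^2 by norm_num, Real.sqrt_sq (by norm_num)]
        have hexp : Real.sqrt (Real.exp (-t)) = Real.exp (-t/2) := by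
          rw [show Real.exp (-t) = Real.exp (-t/2) ^ 2 by
            rw [sq, ← Real.exp_add]; ring_nf,
            Real.sqrt_sq (Real.exp_pos _).le]
        rw [h9, hexp]
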